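/- For every integer i ≥ 2 and all a, b ∈ ℝ, the first-moment Gaussian integral of the i-th normalised stochastic Hermite polynomial satisfies ∫_{a}^{b} ξ·φ_i(ξ)·ω(ξ) dξ = −(1/√i)·( ξ·φ_{i−1}(ξ)·ω(ξ) + (1/√(i−1))·φ_{i−2}(ξ)·ω(ξ) ) evaluated from ξ = a to ξ = b, i.e. it equals −(1/√i)·[ b·φ_{i−1}(b)·ω(b) − a·φ_{i−1}(a)·ω(a) + (1/√(i−1))·( φ_{i−2}(b)·ω(b) − φ_{i−2}(a)·ω(a) ) ]. -/

import Mathlib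

/-- Concrete probabilists' Hermite polynomials as real functions. -/
noncomputable def stmt16H : ℕ → ℝ → ℝ
  | 0 => fun _ => 1
  | 1 => fun ξ => ξ
  | (n+2) => fun ξ => ξ * stmt16H (n+1) ξ - (n+1) * stmt16H n ξ

lemma stmt16H_rec (n : ℕ) (ξ : ℝ) :
    stmt16H (n+1) ξ = ξ * stmt16H n ξ - n * stmt16H (n-1) ξ := by
  cases n with
  | zero => simp [stmt16H]
  | succ m => simp [stmt16H]

lemma stmt16H_deriv : ∀ n : ℕ, ∀ ξ : ℝ, HasDerivAt (stmt16H n) ((n : ℝ) * stmt16H (n-1) ξ) ξ := by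
  intro n
  induction n using Nat.twoStepInduction with
  | zero => intro ξ; simpa [stmt16H] using (hasDerivAt_const ξ (1:ℝ))
  | one => intro ξ; simpa [stmt16H] using (hasDerivAt_id' ξ)
  | more n ih1 ih2 =>
    intro ξ
    have d1 : HasDerivAt (stmt16H (n+1)) (((n:ℝ)+1) * stmt16H n ξ) ξ := by
      have := ih2 ξ; push_cast at this; simpa using this
    have d0 : HasDerivAt (stmt16H n) ((n:ℝ) * stmt16H (n-1) ξ) ξ := ih1 ξ
    have dm : HasDerivAt (fun x => x * stmt16H (n+1) x - ((n:ℝ)+1) * stmt16H n x)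
        (1 * stmt16H (n+1) ξ + ξ * (((n:ℝ)+1) * stmt16H n ξ)
          - ((n:ℝ)+1) * ((n:ℝ) * stmt16H (n-1) ξ)) ξ :=
      ((hasDerivAt_id ξ).mul d1).sub (d0.const_mul _)
    have hfun : stmt16H (n+2) = fun x => x * stmt16H (n+1) x - ((n:ℝ)+1) * stmt16H n x := by
      funext x; simp only [stmt16H]; try push_cast; try ring
    rw [hfun]
    convert dm using 1
    have h := stmt16H_rec n ξ
    push_cast
    linear_combination ((n:ℝ)+1) * h

lemma stmt16H_cont (n : ℕ) : Continuous (stmt16H n) :=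
  continuous_iff_continuousAt.2 fun ξ => (stmt16H_deriv n ξ).continuousAt

open intervalIntegral in
/-- First-moment Gaussian integral of the `i`-th normalised probabilists' Hermite
polynomial for `i ≥ 2`. -/
theorem stmt_16 (He : ℕ → ℝ → ℝ)
    (hHe0 : ∀ ξ, He 0 ξ = 1)
    (hHe1 : ∀ ξ, He 1 ξ = ξ)
    (hHerec : ∀ n ξ, He (n+2) ξ = ξ * He (n+1) ξ - (n+1) * He n ξ)
    (φ : ℕ → ℝ → ℝ)
    (hφ : ∀ i ξ, φ i ξ = He i ξ / Real.sqrt (Nat.factorial i))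
    (ω : ℝ → ℝ)
    (hω : ∀ ξ, ω ξ = Real.exp (-ξ^2 / 2) / Real.sqrt (2 * Real.pi))
    (i : ℕ) (hi : 2 ≤ i) (a b : ℝ) :
    ∫ ξ in a..b, ξ * φ i ξ * ω ξ
      = -(1 / Real.sqrt i) * (b * φ (i-1) b * ω b - a * φ (i-1) a * ω a
          + (1 / Real.sqrt (i-1)) * (φ (i-2) b * ω b - φ (i-2) a * ω a)) := by
  -- He agrees with the concrete H
  have hHe : ∀ n ξ, He n ξ = stmt16H n ξ := by
    intro n
    induction n using Nat.twoStepInduction with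
    | zero => intro ξ; simp [stmt16H, hHe0]
    | one => intro ξ; simp [stmt16H, hHe1]
    | more n ih1 ih2 => intro ξ; simp [stmt16H, hHerec, ih1, ih2]
  -- ω is continuous with derivative -ξ ω ξ
  have hωfun : ω = fun ξ => Real.exp (-ξ^2 / 2) / Real.sqrt (2 * Real.pi) := funext hω
  have hωd : ∀ ξ : ℝ, HasDerivAt ω (-ξ * ω ξ) ξ := by
    intro ξ
    rw [hωfun]
    have h1 : HasDerivAt (fun x : ℝ => -x^2 / 2) (-ξ) ξ := by
      have := ((hasDerivAt_pow 2 ξ).neg).div_const 2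
      convert this using 1; rfl; rfl; rfl
      simp; ring
    have := (h1.exp).div_const (Real.sqrt (2 * Real.pi))
    convert this using 1; rfl; rfl
    ring
  have hωcont : Continuous ω := by
    rw [hωfun]; fun_prop
  obtain ⟨n, rfl⟩ : ∃ n, i = n + 2 := ⟨i - 2, by omega⟩
  have e1 : n + 2 - 1 = n + 1 := rfl
  have e2 : n + 2 - 2 = n := rfl
  simp only [e1, e2, hφ, hHe]
  -- abbreviations
  set c : ℝ := Real.sqrt (Nat.factorial (n+2)) with hc
  have hcpos : 0 < c := Real.sqrt_pos.2 (by positivity)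
  -- the antiderivative
  set F : ℝ → ℝ := fun ξ => -(c⁻¹ * ((ξ * stmt16H (n+1) ξ + stmt16H n ξ) * ω ξ)) with hF
  have hFd : ∀ ξ : ℝ, HasDerivAt F (ξ * (stmt16H (n+2) ξ / c) * ω ξ) ξ := by
    intro ξ
    have d1 : HasDerivAt (stmt16H (n+1)) (((n:ℝ)+1) * stmt16H n ξ) ξ := by
      have := stmt16H_deriv (n+1) ξ; push_cast at this; simpa using this
    have d0 : HasDerivAt (stmt16H n) ((n:ℝ) * stmt16H (n-1) ξ) ξ := stmt16H_deriv n ξ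
    have dG : HasDerivAt (fun x => (x * stmt16H (n+1) x + stmt16H n x) * ω x)
        ((1 * stmt16H (n+1) ξ + ξ * (((n:ℝ)+1) * stmt16H n ξ) + (n:ℝ) * stmt16H (n-1) ξ) * ω ξ
          + (ξ * stmt16H (n+1) ξ + stmt16H n ξ) * (-ξ * ω ξ)) ξ :=
      (((hasDerivAt_id ξ).mul d1).add d0).mul (hωd ξ)
    have dF := (dG.const_mul c⁻¹).neg
    convert dF using 1; rfl; rfl; rfl
    have h2 : stmt16H (n+2) ξ = ξ * stmt16H (n+1) ξ - ((n:ℝ)+1) * stmt16H n ξ := by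
      simp only [stmt16H]; try push_cast; try ring
    have h1 : stmt16H (n+1) ξ = ξ * stmt16H n ξ - (n:ℝ) * stmt16H (n-1) ξ := stmt16H_rec n ξ
    field_simp
    linear_combination (ξ * ω ξ) * h2 + (ω ξ) * h1
  have hint : IntervalIntegrable (fun ξ => ξ * (stmt16H (n+2) ξ / c) * ω ξ)
      MeasureTheory.volume a b :=
    (((continuous_id.mul ((stmt16H_cont (n+2)).div_const c)).mul hωcont)).intervalIntegrable a b
  rw [intervalIntegral.integral_eq_sub_of_hasDerivAt (fun ξ _ => hFd ξ) hint]
  have hcast2 : ((n+2 : ℕ) : ℝ) = (n:ℝ) + 2 := by push_cast; ring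
  have hcast1 : ((n+1 : ℕ) : ℝ) = (n:ℝ) + 1 := by push_cast; ring
  have hfac1 : Real.sqrt ((Nat.factorial (n+2) : ℕ) : ℝ)
      = Real.sqrt ((n:ℝ)+2) * Real.sqrt (Nat.factorial (n+1)) := by
    rw [← Real.sqrt_mul (by positivity)]
    congr 1
    rw [Nat.factorial_succ]
    push_cast; ring
  have hfac2 : Real.sqrt ((Nat.factorial (n+1) : ℕ) : ℝ)
      = Real.sqrt ((n:ℝ)+1) * Real.sqrt (Nat.factorial n) := by
    rw [← Real.sqrt_mul (by positivity)]
    congr 1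
    rw [Nat.factorial_succ]
    push_cast; ring
  rw [hF]
  simp only [hcast2, hcast1]
  rw [hc, hfac1, hfac2]
  have p2 : (0:ℝ) < Real.sqrt ((n:ℝ)+2) := Real.sqrt_pos.2 (by positivity)
  have p1 : (0:ℝ) < Real.sqrt ((n:ℝ)+1) := Real.sqrt_pos.2 (by positivity)
  have p0 : (0:ℝ) < Real.sqrt ((Nat.factorial n : ℕ) : ℝ) := Real.sqrt_pos.2 (by positivity)
  have e3 : ((n:ℝ)+2)-1 = (n:ℝ)+1 := by ring
  rw [e3]
  generalize hg2 : Real.sqrt ((n:ℝ)+2) = s2 at p2 ⊢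
  generalize hg1 : Real.sqrt ((n:ℝ)+1) = s1 at p1 ⊢
  generalize hg0 : Real.sqrt ((Nat.factorial n : ℕ) : ℝ) = s0 at p0 ⊢
  field_simp
  ring
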